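/- Consider the Knapsack instance constructed from non-decreasing sequences A[0…n−1], B[0…n−1], C[0…2n−2] with entries in {0,…,2n²}: for each i an 'A-item' with weight 5n − i and profit 2n² − A[i]; for each j a 'B-item' with weight 10n − j and profit 10n² − B[j]; for each k a 'C-item' with weight 20n + k and profit 100n² + C[k]; knapsack capacity t = 35n. Then the condition (∀ i, j: C[i+j] ≤ A[i] + B[j]) holds if and only if the optimal total profit OPT of this Knapsack instance is at most 112n². -/

import Mathlib

/-- The item type of the Knapsack instance in the lower-bound reduction:
`n` A-items, `n` B-items, and `2n−1` C-items. -/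
abbrev LBItem (n : ℕ) := Fin n ⊕ Fin n ⊕ Fin (2 * n - 1)

/-- Weights of the items: A-item `i` has weight `5n − i`, B-item `j` has weight `10n − j`,
C-item `k` has weight `20n + k`. -/
def lbWeight (n : ℕ) : LBItem n → ℕ :=
  Sum.elim (fun i => 5 * n - i.1) (Sum.elim (fun j => 10 * n - j.1) fun k => 20 * n + k.1)

/-- Profits of the items: A-item `i` has profit `2n² − A[i]`, B-item `j` has profit
`10n² − B[j]`, C-item `k` has profit `100n² + C[k]`. -/
def lbProfit (n : ℕ) (A B C : ℕ → ℤ) : LBItem n → ℤ :=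
  Sum.elim (fun i => 2 * (n : ℤ) ^ 2 - A i.1)
    (Sum.elim (fun j => 10 * (n : ℤ) ^ 2 - B j.1) fun k => 100 * (n : ℤ) ^ 2 + C k.1)

/-- In the Knapsack instance built from monotone sequences `A, B, C` with entries in
`{0,…,2n²}` and capacity `t = 35n`, the verification condition
`∀ i < n, j < n : C[i+j] ≤ A[i] + B[j]` holds iff `OPT ≤ 112n²`. -/
lemma feasible_profit_le (n : ℕ) (hn : 0 < n) (A B C : ℕ → ℤ)
    (hA : ∀ i < n, 0 ≤ A i ∧ A i ≤ 2 * n ^ 2)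
    (hB : ∀ j < n, 0 ≤ B j ∧ B j ≤ 2 * n ^ 2)
    (hC : ∀ k < 2 * n - 1, 0 ≤ C k ∧ C k ≤ 2 * n ^ 2)
    (hCmono : ∀ k l, k ≤ l → l < 2 * n - 1 → C k ≤ C l)
    (hcond : ∀ i < n, ∀ j < n, C (i + j) ≤ A i + B j)
    (S : Finset (LBItem n)) (hS : (∑ x ∈ S, lbWeight n x) ≤ 35 * n) :
    (∑ x ∈ S, lbProfit n A B C x) ≤ 112 * (n : ℤ) ^ 2 := by
  obtain ⟨SA, SR, rfl⟩ : ∃ SA SR, SA.disjSum SR = S :=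
    ⟨S.toLeft, S.toRight, Finset.toLeft_disjSum_toRight⟩
  obtain ⟨SB, SC, rfl⟩ : ∃ SB SC, SB.disjSum SC = SR :=
    ⟨SR.toLeft, SR.toRight, Finset.toLeft_disjSum_toRight⟩
  rw [lbWeight, Finset.sum_sumElim, Finset.sum_sumElim] at hS
  rw [lbProfit, Finset.sum_sumElim, Finset.sum_sumElim]
  set a := SA.card with ha
  set b := SB.card with hb
  set c := SC.card with hc
  -- weight lower bounds
  have wA : a * (4 * n + 1) ≤ ∑ i ∈ SA, (5 * n - i.1) := by
    rw [ha, ← smul_eq_mul]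
    apply Finset.card_nsmul_le_sum
    intro x _; have := x.2; omega
  have wB : b * (9 * n + 1) ≤ ∑ j ∈ SB, (10 * n - j.1) := by
    rw [hb, ← smul_eq_mul]
    apply Finset.card_nsmul_le_sum
    intro x _; have := x.2; omega
  have wC : c * (20 * n) ≤ ∑ k ∈ SC, (20 * n + k.1) := by
    rw [hc, ← smul_eq_mul]
    apply Finset.card_nsmul_le_sum
    intro x _; omega
  have hw : (4 * a + 9 * b + 20 * c) * n ≤ 35 * n := by nlinarith
  have hw' : 4 * a + 9 * b + 20 * c ≤ 35 := Nat.le_of_mul_le_mul_right hw hn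
  -- profit upper bounds
  have pA : (∑ i ∈ SA, (2 * (n : ℤ) ^ 2 - A i.1)) ≤ a * (2 * (n : ℤ) ^ 2) := by
    rw [ha, ← nsmul_eq_mul]
    apply Finset.sum_le_card_nsmul
    intro x _; have := (hA x.1 x.2).1; linarith
  have pB : (∑ j ∈ SB, (10 * (n : ℤ) ^ 2 - B j.1)) ≤ b * (10 * (n : ℤ) ^ 2) := by
    rw [hb, ← nsmul_eq_mul]
    apply Finset.sum_le_card_nsmul
    intro x _; have := (hB x.1 x.2).1; linarith
  have pC : (∑ k ∈ SC, (100 * (n : ℤ) ^ 2 + C k.1)) ≤ c * (102 * (n : ℤ) ^ 2) := by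
    rw [hc, ← nsmul_eq_mul]
    apply Finset.sum_le_card_nsmul
    intro x _; have := (hC x.1 x.2).2
    push_cast; linarith
  by_cases h111 : a = 1 ∧ b = 1 ∧ c = 1
  · obtain ⟨ha1, hb1, hc1⟩ := h111
    obtain ⟨i, hi⟩ := Finset.card_eq_one.mp ha1
    obtain ⟨j, hj⟩ := Finset.card_eq_one.mp hb1
    obtain ⟨k, hk⟩ := Finset.card_eq_one.mp hc1
    subst hi; subst hj; subst hk
    rw [Finset.sum_singleton] at hS ⊢
    rw [Finset.sum_singleton] at hS ⊢
    rw [Finset.sum_singleton] at hS ⊢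
    have hi2 := i.2; have hj2 := j.2; have hk2 := k.2
    have hkij : k.1 ≤ i.1 + j.1 := by omega
    have hij : i.1 + j.1 < 2 * n - 1 := by omega
    have h1 : C k.1 ≤ C (i.1 + j.1) := hCmono _ _ hkij hij
    have h2 : C (i.1 + j.1) ≤ A i.1 + B j.1 := hcond _ i.2 _ j.2
    linarith
  · have hcrude : 2 * a + 10 * b + 102 * c ≤ 112 := by
      have h' : a ≠ 1 ∨ b ≠ 1 ∨ c ≠ 1 := by tauto
      have hc2 : c ≤ 1 := by omega
      have hb2 : b ≤ 3 := by omega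
      have ha2 : a ≤ 8 := by omega
      interval_cases a <;> interval_cases b <;> interval_cases c <;> omega
    have : (∑ i ∈ SA, (2 * (n : ℤ) ^ 2 - A i.1)) + ((∑ j ∈ SB, (10 * (n : ℤ) ^ 2 - B j.1))
        + (∑ k ∈ SC, (100 * (n : ℤ) ^ 2 + C k.1)))
        ≤ (2 * a + 10 * b + 102 * c : ℕ) * (n : ℤ) ^ 2 := by
      push_cast
      linarith
    refine this.trans ?_
    have hn2 : (0 : ℤ) ≤ (n : ℤ) ^ 2 := by positivity
    calc ((2 * a + 10 * b + 102 * c : ℕ) : ℤ) * (n : ℤ) ^ 2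
        ≤ (112 : ℕ) * (n : ℤ) ^ 2 := by
          apply mul_le_mul_of_nonneg_right _ hn2
          exact_mod_cast hcrude
      _ = 112 * (n : ℤ) ^ 2 := by norm_num

theorem knapsack_lower_bound_reduction (n : ℕ) (hn : 0 < n) (A B C : ℕ → ℤ)
    (hA : ∀ i < n, 0 ≤ A i ∧ A i ≤ 2 * n ^ 2)
    (hAmono : ∀ i j, i ≤ j → j < n → A i ≤ A j)
    (hB : ∀ j < n, 0 ≤ B j ∧ B j ≤ 2 * n ^ 2)
    (hBmono : ∀ i j, i ≤ j → j < n → B i ≤ B j)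
    (hC : ∀ k < 2 * n - 1, 0 ≤ C k ∧ C k ≤ 2 * n ^ 2)
    (hCmono : ∀ k l, k ≤ l → l < 2 * n - 1 → C k ≤ C l) :
    (∀ i < n, ∀ j < n, C (i + j) ≤ A i + B j) ↔
      ((Finset.univ : Finset (Finset (LBItem n))).filter
          (fun S => (∑ x ∈ S, lbWeight n x) ≤ 35 * n)).sup'
        ⟨∅, by simp⟩ (fun S => ∑ x ∈ S, lbProfit n A B C x) ≤ 112 * (n : ℤ) ^ 2 := by
  constructor
  · intro hcond
    apply Finset.sup'_le
    intro S hS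
    rw [Finset.mem_filter] at hS
    exact feasible_profit_le n hn A B C hA hB hC hCmono hcond S hS.2
  · intro hOPT i hi j hj
    by_contra hlt
    push_neg at hlt
    have hij : i + j < 2 * n - 1 := by omega
    set S : Finset (LBItem n) :=
      insert (Sum.inl ⟨i, hi⟩) (insert (Sum.inr (Sum.inl ⟨j, hj⟩))
        {Sum.inr (Sum.inr ⟨i + j, hij⟩)}) with hSdef
    have hwS : (∑ x ∈ S, lbWeight n x) = 35 * n := by
      rw [hSdef, Finset.sum_insert (by simp), Finset.sum_insert (by simp),
        Finset.sum_singleton]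
      simp only [lbWeight, Sum.elim_inl, Sum.elim_inr]
      omega
    have hmem : S ∈ (Finset.univ : Finset (Finset (LBItem n))).filter
        (fun S => (∑ x ∈ S, lbWeight n x) ≤ 35 * n) := by
      rw [Finset.mem_filter]
      exact ⟨Finset.mem_univ _, le_of_eq hwS⟩
    have hle := Finset.le_sup' (f := fun S => ∑ x ∈ S, lbProfit n A B C x) hmem
    have hpS : (∑ x ∈ S, lbProfit n A B C x)
        = 112 * (n : ℤ) ^ 2 + C (i + j) - A i - B j := by
      rw [hSdef, Finset.sum_insert (by simp), Finset.sum_insert (by simp),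
        Finset.sum_singleton]
      simp only [lbProfit, Sum.elim_inl, Sum.elim_inr]
      ring
    rw [hpS] at hle
    linarith
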